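/- For P(z) = A(z)A(z^{-1}) − B(z)B(z^{-1}) with A(z) = 2s + t − Σ(z^{β_i} + z^{−β_i}) and B(z) = −Σ z^{γ_i}, one has P(−1) = 4(2β_odd + γ_even)(2β_odd + γ_odd), where β_odd is the number of odd β_i, and γ_even, γ_odd are the numbers of even and odd γ_j respectively. -/
import Mathlib

lemma sum_neg_one_zpow (n : ℕ) (f : Fin n → ℤ) :
    ∑ i, (-1 : ℂ) ^ (f i) =
      ((Finset.univ.filter fun i => Even (f i)).card : ℂ) -
      ((Finset.univ.filter fun i => Odd (f i)).card : ℂ) := by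
  have h : ∀ i, (-1 : ℂ) ^ (f i) = if Even (f i) then 1 else -1 := by
    intro i
    by_cases h : Even (f i)
    · simp [h, h.neg_one_zpow]
    · rw [if_neg h]
      exact (Int.not_even_iff_odd.mp h).neg_one_zpow
  simp only [h]
  rw [Finset.sum_ite, Finset.sum_const, Finset.sum_const]
  have : (Finset.univ.filter fun i => ¬ Even (f i)) =
      (Finset.univ.filter fun i => Odd (f i)) := by
    simp [Int.not_even_iff_odd]
  rw [this]
  push_cast
  ring

theorem stmt16 (s t : ℕ) (ht : 1 ≤ t) (β : Fin s → ℤ) (γ : Fin t → ℤ)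
    (A B P : ℂ → ℂ)
    (hA : ∀ z : ℂ, z ≠ 0 → A z = (2 * s + t : ℂ) - ∑ i, (z ^ (β i) + z ^ (-β i)))
    (hB : ∀ z : ℂ, z ≠ 0 → B z = -∑ i, z ^ (γ i))
    (hP : ∀ z : ℂ, z ≠ 0 → P z = A z * A z⁻¹ - B z * B z⁻¹)
    (βodd γodd γeven : ℕ)
    (hβodd : βodd = (Finset.univ.filter fun i => Odd (β i)).card)
    (hγodd : γodd = (Finset.univ.filter fun j => Odd (γ j)).card)
    (hγeven : γeven = (Finset.univ.filter fun j => Even (γ j)).card) :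
    P (-1) = 4 * (2 * βodd + γeven) * (2 * βodd + γodd) := by
  have hne : (-1 : ℂ) ≠ 0 := by norm_num
  have hinv : (-1 : ℂ)⁻¹ = -1 := by norm_num
  -- card identities
  have hscard : ((Finset.univ.filter fun i => Even (β i)).card : ℂ) = s - βodd := by
    have := Finset.card_filter_add_card_filter_not
      (s := (Finset.univ : Finset (Fin s))) (p := fun i => Even (β i))
    simp only [Int.not_even_iff_odd, Finset.card_univ, Fintype.card_fin] at this
    rw [hβodd, eq_sub_iff_add_eq, ← Nat.cast_add]
    norm_cast
  have htcard : (t : ℂ) = γeven + γodd := by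
    have := Finset.card_filter_add_card_filter_not
      (s := (Finset.univ : Finset (Fin t))) (p := fun j => Even (γ j))
    simp only [Int.not_even_iff_odd, Finset.card_univ, Fintype.card_fin] at this
    rw [hγeven, hγodd, ← Nat.cast_add, this]
  have hAval : A (-1) = (t : ℂ) + 4 * βodd := by
    rw [hA _ hne]
    have : ∀ i : Fin s, (-1 : ℂ) ^ (β i) + (-1 : ℂ) ^ (-β i) = 2 * (-1 : ℂ) ^ (β i) := by
      intro i
      rw [zpow_neg, ← inv_zpow, hinv]
      ring
    rw [Finset.sum_congr rfl fun i _ => this i, ← Finset.mul_sum, sum_neg_one_zpow, hscard, ← hβodd]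
    ring
  have hBval : B (-1) = -((γeven : ℂ) - γodd) := by
    rw [hB _ hne, sum_neg_one_zpow, hγeven, hγodd]
  rw [hP _ hne, hinv, hAval, hBval, htcard]
  ring
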